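/- For any finite alphabet α and any two vectors Q, V : Fin N → α, the maximum over all permutations σ of Fin N of the number of positions j with V(σ(j)) = Q(j) equals the cardinality of the multiset intersection of the values of Q and V, i.e., equals ∑_{a ∈ α} min(|{j : Q(j) = a}|, |{j : V(j) = a}|). -/

import Mathlib

open Finset

theorem mastermind_total_match_eq_multiset_inter_card
    {α : Type*} [Fintype α] [DecidableEq α] {N : ℕ} (Q V : Fin N → α) :
    (Finset.univ : Finset (Equiv.Perm (Fin N))).sup
        (fun σ => (Finset.univ.filter (fun j => V (σ j) = Q j)).card)
      = ∑ a : α,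
          min ((Finset.univ.filter (fun j => Q j = a)).card)
              ((Finset.univ.filter (fun j => V j = a)).card) := by
  classical
  set A : α → Finset (Fin N) := fun a => univ.filter (fun j => Q j = a) with hA
  set B : α → Finset (Fin N) := fun a => univ.filter (fun j => V j = a) with hB
  apply le_antisymm
  · apply Finset.sup_le
    intro σ _
    set M := univ.filter (fun j => V (σ j) = Q j) with hM
    have hcard : M.card = ∑ a : α, (M.filter (fun j => Q j = a)).card := by
      apply Finset.card_eq_sum_card_fiberwise (f := Q) (t := univ)
      intro x _; exact mem_univ _
    rw [hcard]
    apply Finset.sum_le_sum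
    intro a _
    apply le_min
    · apply Finset.card_le_card
      intro j hj
      simp only [hM, hA, mem_filter] at *
      exact ⟨mem_univ _, hj.2⟩
    · apply Finset.card_le_card_of_injOn σ
      · intro j hj
        simp only [hM, Finset.mem_coe, mem_filter] at hj
        simp only [hB, Finset.mem_coe, mem_filter]
        exact ⟨mem_univ _, by rw [hj.1.2, hj.2]⟩
      · exact fun x _ y _ h => σ.injective h
  · have hAm : ∀ a, min (A a).card (B a).card ≤ (A a).card := fun a => min_le_left _ _
    have hBm : ∀ a, min (A a).card (B a).card ≤ (B a).card := fun a => min_le_right _ _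
    choose A' hA'sub hA'card using fun a => Finset.exists_subset_card_eq (hAm a)
    choose B' hB'sub hB'card using fun a => Finset.exists_subset_card_eq (hBm a)
    have hQA : ∀ a j, j ∈ A' a → Q j = a := fun a j hj => (mem_filter.mp (hA'sub a hj)).2
    have hVB : ∀ a j, j ∈ B' a → V j = a := fun a j hj => (mem_filter.mp (hB'sub a hj)).2
    set S : Finset (Fin N) := univ.biUnion A' with hS
    set T : Finset (Fin N) := univ.biUnion B' with hT
    have hdisjA : ∀ x ∈ (univ : Finset α), ∀ y ∈ (univ : Finset α), x ≠ y →
        Disjoint (A' x) (A' y) := by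
      intro x _ y _ hxy
      rw [Finset.disjoint_left]
      intro j hjx hjy
      exact hxy ((hQA x j hjx).symm.trans (hQA y j hjy))
    have hdisjB : ∀ x ∈ (univ : Finset α), ∀ y ∈ (univ : Finset α), x ≠ y →
        Disjoint (B' x) (B' y) := by
      intro x _ y _ hxy
      rw [Finset.disjoint_left]
      intro j hjx hjy
      exact hxy ((hVB x j hjx).symm.trans (hVB y j hjy))
    have hScard : S.card = ∑ a : α, min (A a).card (B a).card := by
      rw [hS, Finset.card_biUnion hdisjA]
      exact Finset.sum_congr rfl fun a _ => hA'card a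
    have hTcard : T.card = ∑ a : α, min (A a).card (B a).card := by
      rw [hT, Finset.card_biUnion hdisjB]
      exact Finset.sum_congr rfl fun a _ => hB'card a
    have hmemS : ∀ j, j ∈ S → j ∈ A' (Q j) := by
      intro j h
      obtain ⟨a, _, ha⟩ := mem_biUnion.mp h
      rwa [hQA a j ha]
    let e : ∀ a : α, (A' a : Finset (Fin N)) ≃ (B' a : Finset (Fin N)) := fun a =>
      Finset.equivOfCardEq (by rw [hA'card, hB'card])
    have hcompl : (Sᶜ : Finset (Fin N)).card = (Tᶜ : Finset (Fin N)).card := by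
      rw [Finset.card_compl, Finset.card_compl, hScard, hTcard]
    let e' : (Sᶜ : Finset (Fin N)) ≃ (Tᶜ : Finset (Fin N)) := Finset.equivOfCardEq hcompl
    let g : Fin N → Fin N := fun j =>
      if h : j ∈ S then (e (Q j) ⟨j, hmemS j h⟩ : Fin N)
      else (e' ⟨j, Finset.mem_compl.mpr h⟩ : Fin N)
    have hgS : ∀ j (h : j ∈ S), g j ∈ B' (Q j) := by
      intro j h
      simp only [g, dif_pos h]
      exact (e (Q j) ⟨j, hmemS j h⟩).2
    have hgT : ∀ j, j ∈ S → g j ∈ T := by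
      intro j h
      exact mem_biUnion.mpr ⟨Q j, mem_univ _, hgS j h⟩
    have hgTc : ∀ j (h : j ∉ S), g j ∈ Tᶜ := by
      intro j h
      simp only [g, dif_neg h]
      exact (e' ⟨j, Finset.mem_compl.mpr h⟩).2
    have key : ∀ (a : α) (z : Fin N) (hz : z ∈ S) (_ : Q z = a) (hb : g z ∈ B' a),
        z = ((e a).symm ⟨g z, hb⟩).val := by
      intro a z hz ha hb
      subst ha
      have hval : g z = ((e (Q z)) ⟨z, hmemS z hz⟩ : Fin N) := by
        simp only [g, dif_pos hz]
      have h2 : (⟨g z, hb⟩ : {x // x ∈ B' (Q z)}) = e (Q z) ⟨z, hmemS z hz⟩ :=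
        Subtype.ext hval
      rw [h2, Equiv.symm_apply_apply]
    have hginj : Function.Injective g := by
      intro x y hxy
      by_cases hx : x ∈ S <;> by_cases hy : y ∈ S
      · have h1 : g x ∈ B' (Q x) := hgS x hx
        have h2 : g y ∈ B' (Q y) := hgS y hy
        have hq : Q x = Q y := by
          by_contra hne
          exact (Finset.disjoint_left.mp (hdisjB _ (mem_univ _) _ (mem_univ _) hne))
            h1 (hxy ▸ h2)
        have h2' : g y ∈ B' (Q x) := by rw [hq]; exact h2
        have kx := key (Q x) x hx rfl h1
        have ky := key (Q x) y hy hq.symm h2'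
        rw [kx, ky]
        congr 2
        exact Subtype.ext hxy
      · exact absurd (hxy ▸ hgT x hx) (Finset.mem_compl.mp (hgTc y hy))
      · exact absurd (hgT y hy) (Finset.mem_compl.mp (hxy ▸ hgTc x hx))
      · simp only [g, dif_neg hx, dif_neg hy] at hxy
        have := e'.injective (Subtype.ext hxy)
        exact congrArg Subtype.val this
    let σ : Equiv.Perm (Fin N) := Equiv.ofBijective g (Finite.injective_iff_bijective.mp hginj)
    have hfinal : ∑ a : α, min (A a).card (B a).card ≤
        (univ.filter (fun j => V (σ j) = Q j)).card := by
      rw [← hScard]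
      apply Finset.card_le_card
      intro j hj
      refine mem_filter.mpr ⟨mem_univ _, ?_⟩
      have : σ j = g j := rfl
      rw [this]
      exact hVB (Q j) (g j) (hgS j hj)
    exact le_trans hfinal (Finset.le_sup (f := fun τ : Equiv.Perm (Fin N) => (univ.filter (fun j => V (τ j) = Q j)).card) (mem_univ σ))
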